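/- Suppose a subgroup H of PL₀(I) is isomorphic to Thompson's group F. Then there exists an orbital W = (a,c) of H and an element h ∈ H such that h moves points arbitrarily close to one endpoint of W but fixes pointwise a neighborhood (within W) of the other endpoint. -/

import Mathlib

/-- The support of a permutation `f` of `ℝ` : the set of points moved by `f`. -/
def Supp (f : Equiv.Perm ℝ) : Set ℝ := {x : ℝ | f x ≠ x}

/-- `IsPL0 f` says that `f` is (the extension by the identity on `ℝ \ [0,1]` of) a
piecewise-linear orientation-preserving homeomorphism of the unit interval `[0,1]`
with only finitely many breakpoints; this represents membership in `PL₀(I)`.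
The finite set `B` collects the possible points of non-differentiability: away from
`B` the map is locally affine. -/
def IsPL0 (f : Equiv.Perm ℝ) : Prop :=
  StrictMono ⇑f ∧ (∀ x : ℝ, x ≤ 0 → f x = x) ∧ (∀ x : ℝ, 1 ≤ x → f x = x) ∧
    ∃ B : Finset ℝ, ∀ x : ℝ, x ∉ B → ∃ s t : ℝ, ∀ᶠ y in nhds x, f y = s * y + t

/-- `IsOrbital f a b` : the open interval `(a,b)` is an orbital of `f`, i.e. a
connected component of `Supp f` (an open interval contained in the support whose
endpoints are fixed by `f`). -/
def IsOrbital (f : Equiv.Perm ℝ) (a b : ℝ) : Prop :=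
  a < b ∧ Set.Ioo a b ⊆ Supp f ∧ f a = a ∧ f b = b
open scoped commutatorElement
/-- The relators of the standard finite presentation
`F ≅ ⟨x₀, x₁ | [x₀x₁⁻¹, x₁^{x₀}] = [x₀x₁⁻¹, x₁^{x₀²}] = 1⟩` of Thompson's group `F`,
written out with the paper's word-order (right-action) convention translated into
Mathlib's multiplication: the word `x₀x₁⁻¹` is `x₁⁻¹ * x₀` and `x₁^{x₀} = x₀⁻¹x₁x₀`
is `x₀ * x₁ * x₀⁻¹`. -/
def thompsonRels : Set (FreeGroup (Fin 2)) :=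
  { ⁅(FreeGroup.of (1 : Fin 2))⁻¹ * FreeGroup.of (0 : Fin 2),
      FreeGroup.of (0 : Fin 2) * FreeGroup.of (1 : Fin 2) * (FreeGroup.of (0 : Fin 2))⁻¹⁆,
    ⁅(FreeGroup.of (1 : Fin 2))⁻¹ * FreeGroup.of (0 : Fin 2),
      FreeGroup.of (0 : Fin 2) ^ 2 * FreeGroup.of (1 : Fin 2) *
        (FreeGroup.of (0 : Fin 2) ^ 2)⁻¹⁆ }

/-- Thompson's group `F`, given by its standard finite presentation. -/
abbrev ThompsonF : Type := PresentedGroup thompsonRels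

/-- The support of a subgroup `H` of `Perm ℝ`. -/
def SuppSubgroup (H : Subgroup (Equiv.Perm ℝ)) : Set ℝ :=
  {x : ℝ | ∃ h ∈ H, h x ≠ x}

/-- `(a,c)` is an orbital of the subgroup `H`, i.e. a connected component of
`SuppSubgroup H`. -/
def IsSubgroupOrbital (H : Subgroup (Equiv.Perm ℝ)) (a c : ℝ) : Prop :=
  a < c ∧ Set.Ioo a c ⊆ SuppSubgroup H ∧ (∀ h ∈ H, h a = a) ∧ (∀ h ∈ H, h c = c)

open Set Filter

@[simp] theorem Equiv.Perm.apply_inv_self {α : Type*} (f : Equiv.Perm α) (x : α) : f (f⁻¹ x) = x :=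
  Equiv.apply_symm_apply f x

@[simp] theorem Equiv.Perm.inv_apply_self {α : Type*} (f : Equiv.Perm α) (x : α) : f⁻¹ (f x) = x :=
  Equiv.symm_apply_apply f x




namespace UPC

/-- The model translation `x₀ : t ↦ t + 1`. -/
def m0 : Equiv.Perm ℝ := Equiv.addRight (1 : ℝ)

/-- The model map `x₁` : identity on `(-∞,0]`, `2t` on `[0,1]`, `t+1` on `[1,∞)`. -/
noncomputable def m1 : Equiv.Perm ℝ where
  toFun t := if t ≤ 0 then t else if t ≤ 1 then 2*t else t+1
  invFun t := if t ≤ 0 then t else if t ≤ 2 then t/2 else t-1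
  left_inv t := by
    by_cases h : t ≤ 0
    · simp [h]
    · by_cases h1 : t ≤ 1
      · have : ¬ (2*t ≤ 0) := by linarith
        simp only [h, if_false, h1, if_true, this]
        rw [if_pos (by linarith)]; ring
      · have h2 : ¬ (t+1 ≤ 0) := by linarith
        have h3 : ¬ (t+1 ≤ 2) := by linarith
        simp only [h, if_false, h1, if_false, h2, h3]
        ring
  right_inv t := by
    by_cases h : t ≤ 0
    · simp [h]
    · by_cases h1 : t ≤ 2
      · have : ¬ (t/2 ≤ 0) := by push_neg at h ⊢; linarith
        simp only [h, if_false, h1, if_true, this]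
        rw [if_pos (by linarith)]; ring
      · have h2 : ¬ (t-1 ≤ 0) := by linarith
        have h3 : ¬ (t-1 ≤ 1) := by linarith
        simp only [h, if_false, h1, if_false, h2, h3]
        ring

lemma m0_apply (t : ℝ) : m0 t = t + 1 := rfl
lemma m0_inv_apply (t : ℝ) : m0⁻¹ t = t - 1 := rfl
lemma m1_apply (t : ℝ) : m1 t = if t ≤ 0 then t else if t ≤ 1 then 2*t else t+1 := rfl
lemma m1_inv_apply (t : ℝ) : m1⁻¹ t = if t ≤ 0 then t else if t ≤ 2 then t/2 else t-1 := rfl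

lemma m1_of_nonpos {t : ℝ} (h : t ≤ 0) : m1 t = t := by rw [m1_apply, if_pos h]
lemma m1_ge_one {t : ℝ} (h : 1 ≤ t) : m1 t = t + 1 := by
  rw [m1_apply]
  rcases lt_or_eq_of_le h with h' | h'
  · rw [if_neg (by linarith), if_neg (by linarith)]
  · rw [if_neg (by linarith), if_pos (by linarith)]; rw [← h']; ring

-- the element u = m1⁻¹ * m0 : t ↦ m1⁻¹ (t+1)
lemma u_apply (t : ℝ) : (m1⁻¹ * m0) t = if t ≤ -1 then t+1 else if t ≤ 1 then (t+1)/2 else t := by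
  rw [Equiv.Perm.mul_apply, m0_apply, m1_inv_apply]
  by_cases h : t ≤ -1
  · rw [if_pos (by linarith), if_pos h]
  · rw [if_neg (by linarith), if_neg h]
    by_cases h1 : t ≤ 1
    · rw [if_pos (by linarith), if_pos h1]
    · rw [if_neg (by linarith), if_neg h1]; ring

lemma u_id_ge_one {t : ℝ} (h : 1 ≤ t) : (m1⁻¹ * m0) t = t := by
  rw [u_apply]
  rcases lt_or_eq_of_le h with h' | h'
  · rw [if_neg (by linarith), if_neg (by linarith)]
  · rw [if_neg (by linarith), if_pos (by linarith), ← h']; ring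

lemma u_le_one {t : ℝ} (h : t ≤ 1) : (m1⁻¹ * m0) t ≤ 1 := by
  rw [u_apply]
  by_cases h1 : t ≤ -1
  · rw [if_pos h1]; linarith
  · rw [if_neg h1, if_pos h]; linarith

-- v1 = m0 * m1 * m0⁻¹
lemma v1_apply (t : ℝ) : (m0 * m1 * m0⁻¹) t = m1 (t-1) + 1 := by
  simp [Equiv.Perm.mul_apply, m0_apply, m0_inv_apply]

lemma v1_id_le_one {t : ℝ} (h : t ≤ 1) : (m0 * m1 * m0⁻¹) t = t := by
  rw [v1_apply, m1_of_nonpos (by linarith)]; ring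

lemma v1_ge_one {t : ℝ} (h : 1 ≤ t) : 1 ≤ (m0 * m1 * m0⁻¹) t := by
  rw [v1_apply]
  by_cases h1 : t - 1 ≤ 0
  · rw [m1_of_nonpos h1]; linarith
  · rw [m1_apply]; push_neg at h1
    rw [if_neg (by linarith)]
    by_cases h2 : t - 1 ≤ 1
    · rw [if_pos h2]; linarith
    · rw [if_neg h2]; linarith

-- v2 = m0^2 * m1 * m0⁻²
lemma v2_apply (t : ℝ) : (m0^2 * m1 * (m0^2)⁻¹) t = m1 (t-2) + 2 := by
  have h1 : ∀ s : ℝ, (m0^2) s = s + 2 := by intro s; rw [sq]; simp [Equiv.Perm.mul_apply, m0_apply]; ring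
  have h2 : ∀ s : ℝ, (m0^2)⁻¹ s = s - 2 := by
    intro s; rw [sq]; simp [mul_inv_rev, Equiv.Perm.mul_apply, m0_inv_apply]; ring
  simp [Equiv.Perm.mul_apply, h1, h2]

lemma v2_id_le_one {t : ℝ} (h : t ≤ 1) : (m0^2 * m1 * (m0^2)⁻¹) t = t := by
  rw [v2_apply, m1_of_nonpos (by linarith)]; ring

lemma v2_ge_one {t : ℝ} (h : 1 ≤ t) : 1 ≤ (m0^2 * m1 * (m0^2)⁻¹) t := by
  rw [v2_apply]
  by_cases h1 : t - 2 ≤ 0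
  · rw [m1_of_nonpos h1]; linarith
  · rw [m1_apply]; push_neg at h1
    rw [if_neg (by linarith)]
    by_cases h2 : t - 2 ≤ 1
    · rw [if_pos h2]; linarith
    · rw [if_neg h2]; linarith

/-- generic: if `b` is identity on `{t | t ≤ 1}`-complement behaviour ... commuting lemma. -/
lemma model_commute {b : Equiv.Perm ℝ}
    (hb1 : ∀ t, t ≤ 1 → b t = t) (hb2 : ∀ t, 1 ≤ t → 1 ≤ b t) :
    (m1⁻¹ * m0) * b = b * (m1⁻¹ * m0) := by
  apply Equiv.ext
  intro t
  rw [Equiv.Perm.mul_apply (m1⁻¹ * m0) b, Equiv.Perm.mul_apply b (m1⁻¹ * m0)]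
  by_cases h : t ≤ 1
  · rw [hb1 t h, hb1 _ (u_le_one h)]
  · push_neg at h
    rw [u_id_ge_one h.le, u_id_ge_one (hb2 t h.le)]

lemma rel1_model' : (m1⁻¹ * m0) * (m0 * m1 * m0⁻¹) = (m0 * m1 * m0⁻¹) * (m1⁻¹ * m0) :=
  model_commute (fun t ht => v1_id_le_one ht) (fun t ht => v1_ge_one ht)

lemma rel2_model' : (m1⁻¹ * m0) * (m0^2 * m1 * (m0^2)⁻¹) = (m0^2 * m1 * (m0^2)⁻¹) * (m1⁻¹ * m0) :=
  model_commute (fun t ht => v2_id_le_one ht) (fun t ht => v2_ge_one ht)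

lemma v1_ne_v2_model : (m0 * m1 * m0⁻¹) ≠ (m0^2 * m1 * (m0^2)⁻¹) := by
  intro h
  have h1 : (m0 * m1 * m0⁻¹) (3/2 : ℝ) = 2 := by
    rw [v1_apply, m1_apply]
    norm_num
  have h2 : (m0^2 * m1 * (m0^2)⁻¹) (3/2 : ℝ) = 3/2 := by
    rw [v2_apply, m1_of_nonpos (by norm_num)]
    norm_num
  rw [h] at h1
  rw [h1] at h2
  norm_num at h2

end UPC

namespace UPC


section TFfacts

lemma rel_mem_iff (r : FreeGroup (Fin 2)) : r ∈ thompsonRels ↔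
    r = ⁅(FreeGroup.of (1 : Fin 2))⁻¹ * FreeGroup.of (0 : Fin 2),
      FreeGroup.of (0 : Fin 2) * FreeGroup.of (1 : Fin 2) * (FreeGroup.of (0 : Fin 2))⁻¹⁆ ∨
    r = ⁅(FreeGroup.of (1 : Fin 2))⁻¹ * FreeGroup.of (0 : Fin 2),
      FreeGroup.of (0 : Fin 2) ^ 2 * FreeGroup.of (1 : Fin 2) *
        (FreeGroup.of (0 : Fin 2) ^ 2)⁻¹⁆ := by
  simp [thompsonRels]

lemma mk_rel_one {r : FreeGroup (Fin 2)} (hr : r ∈ thompsonRels) :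
    PresentedGroup.mk thompsonRels r = 1 := by
  have : r ∈ Subgroup.normalClosure thompsonRels := Subgroup.subset_normalClosure hr
  exact (QuotientGroup.eq_one_iff r).2 this

/-- relator 1 in `ThompsonF`. -/
lemma TF_rel1 :
    ((PresentedGroup.of 1 : ThompsonF)⁻¹ * PresentedGroup.of 0) *
      (PresentedGroup.of 0 * PresentedGroup.of 1 * (PresentedGroup.of 0)⁻¹) =
    (PresentedGroup.of 0 * PresentedGroup.of 1 * (PresentedGroup.of 0)⁻¹) *
      ((PresentedGroup.of 1 : ThompsonF)⁻¹ * PresentedGroup.of 0) := by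
  have h := mk_rel_one ((rel_mem_iff _).2 (Or.inl rfl))
  rw [map_commutatorElement] at h
  rw [← commutatorElement_eq_one_iff_mul_comm]
  simpa [PresentedGroup.of, map_mul, map_inv] using h

lemma TF_rel2 :
    ((PresentedGroup.of 1 : ThompsonF)⁻¹ * PresentedGroup.of 0) *
      ((PresentedGroup.of 0)^2 * PresentedGroup.of 1 * ((PresentedGroup.of 0)^2)⁻¹) =
    ((PresentedGroup.of 0)^2 * PresentedGroup.of 1 * ((PresentedGroup.of 0)^2)⁻¹) *
      ((PresentedGroup.of 1 : ThompsonF)⁻¹ * PresentedGroup.of 0) := by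
  have h := mk_rel_one ((rel_mem_iff _).2 (Or.inr rfl))
  rw [map_commutatorElement] at h
  rw [← commutatorElement_eq_one_iff_mul_comm]
  simpa [PresentedGroup.of, map_mul, map_inv, map_pow] using h

end TFfacts




noncomputable def mfun : Fin 2 → Equiv.Perm ℝ := ![m0, m1]

lemma lift_rels : ∀ r ∈ thompsonRels, FreeGroup.lift mfun r = 1 := by
  intro r hr
  rcases hr with h | h <;> subst h <;>
    rw [map_commutatorElement, commutatorElement_eq_one_iff_mul_comm] <;>
    simp only [map_mul, map_inv, map_pow, FreeGroup.lift_apply_of, mfun] <;>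
    simp only [Matrix.cons_val_zero, Matrix.cons_val_one, Matrix.head_cons]
  · exact rel1_model'
  · exact rel2_model'

noncomputable def modelHom : ThompsonF →* Equiv.Perm ℝ := PresentedGroup.toGroup lift_rels

lemma modelHom_of (i : Fin 2) : modelHom (PresentedGroup.of i) = mfun i :=
  PresentedGroup.toGroup.of lift_rels

lemma TF_v1_ne_v2 :
    (PresentedGroup.of 0 : ThompsonF) * PresentedGroup.of 1 * (PresentedGroup.of 0)⁻¹ ≠
    (PresentedGroup.of 0 : ThompsonF)^2 * PresentedGroup.of 1 * ((PresentedGroup.of 0)^2)⁻¹ := by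
  intro h
  apply v1_ne_v2_model
  have := congrArg modelHom h
  simpa only [map_mul, map_inv, map_pow, modelHom_of, mfun,
    Matrix.cons_val_zero, Matrix.cons_val_one, Matrix.head_cons] using this


end UPC


namespace UPC


lemma comm_of_conj {G : Type*} [Group G] {a b : G} (h : a * b * a⁻¹ = b) : a * b = b * a := by
  have h2 : a * b * a⁻¹ * a = b * a := by rw [h]
  rwa [inv_mul_cancel_right] at h2

section GroupFacts
variable {G : Type*} [Group G] (g0 g1 : G)

def Vel (n : ℤ) : G := g0^n * g1 * g0^(-n)

variable {g0 g1}

lemma VelC {n n' : ℤ} (h : n = n') : Vel g0 g1 n = Vel g0 g1 n' := by rw [h]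

lemma Vel_zero : Vel g0 g1 0 = g1 := by simp [Vel]

lemma Vel_shift (j n : ℤ) : g0^j * Vel g0 g1 n * g0^(-j) = Vel g0 g1 (n + j) := by
  simp only [Vel]
  rw [show (-(n+j)) = -n + -j by ring, zpow_add, zpow_add]
  group

section rels
variable (hrel1 : (g1⁻¹ * g0) * (g0 * g1 * g0⁻¹) = (g0 * g1 * g0⁻¹) * (g1⁻¹ * g0))
    (hrel2 : (g1⁻¹ * g0) * (g0^2 * g1 * (g0^2)⁻¹) = (g0^2 * g1 * (g0^2)⁻¹) * (g1⁻¹ * g0))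

include hrel1 in
lemma base1 : Vel g0 g1 0 * Vel g0 g1 1 * (Vel g0 g1 0)⁻¹ = Vel g0 g1 2 := by
  have h1 : Vel g0 g1 1 = g0 * g1 * g0⁻¹ := by
    show g0^(1:ℤ) * g1 * g0^(-1:ℤ) = _
    group
  have h2 : Vel g0 g1 2 = g1 * ((g1⁻¹ * g0) * (g0 * g1 * g0⁻¹) * (g1⁻¹ * g0)⁻¹) * g1⁻¹ := by
    show g0^(2:ℤ) * g1 * g0^(-2:ℤ) = _
    group
    rw [zpow_two]
  rw [Vel_zero, h1, h2, hrel1]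
  group

include hrel2 in
lemma base2 : Vel g0 g1 0 * Vel g0 g1 2 * (Vel g0 g1 0)⁻¹ = Vel g0 g1 3 := by
  have h2 : Vel g0 g1 2 = g0^2 * g1 * (g0^2)⁻¹ := by
    show g0^(2:ℤ) * g1 * g0^(-2:ℤ) = _
    group
  have h3 : Vel g0 g1 3 = g1 * ((g1⁻¹ * g0) * (g0^2 * g1 * (g0^2)⁻¹) * (g1⁻¹ * g0)⁻¹) * g1⁻¹ := by
    show g0^(3:ℤ) * g1 * g0^(-3:ℤ) = _
    group
  rw [Vel_zero, h2, h3, hrel2]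
  group

include hrel1 in
lemma gap1 (k : ℤ) : Vel g0 g1 k * Vel g0 g1 (k+1) * (Vel g0 g1 k)⁻¹ = Vel g0 g1 (k+2) := by
  have h0 := base1 hrel1
  have e0 : Vel g0 g1 k = g0^k * Vel g0 g1 0 * g0^(-k) := by rw [Vel_shift]; exact VelC (by ring)
  have e1 : Vel g0 g1 (k+1) = g0^k * Vel g0 g1 1 * g0^(-k) := by
    rw [Vel_shift]; exact VelC (by ring)
  have e2 : Vel g0 g1 (k+2) = g0^k * Vel g0 g1 2 * g0^(-k) := by
    rw [Vel_shift]; exact VelC (by ring)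
  rw [e0, e1, e2, ← h0]; group

include hrel2 in
lemma gap2 (k : ℤ) : Vel g0 g1 k * Vel g0 g1 (k+2) * (Vel g0 g1 k)⁻¹ = Vel g0 g1 (k+3) := by
  have h0 := base2 hrel2
  have e0 : Vel g0 g1 k = g0^k * Vel g0 g1 0 * g0^(-k) := by rw [Vel_shift]; exact VelC (by ring)
  have e1 : Vel g0 g1 (k+2) = g0^k * Vel g0 g1 2 * g0^(-k) := by
    rw [Vel_shift]; exact VelC (by ring)
  have e2 : Vel g0 g1 (k+3) = g0^k * Vel g0 g1 3 * g0^(-k) := by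
    rw [Vel_shift]; exact VelC (by ring)
  rw [e0, e1, e2, ← h0]; group

include hrel1 hrel2 in
/-- master relation family : `v_k v_n v_k⁻¹ = v_{n+1}` for `k < n`. -/
lemma Rrel : ∀ (k n : ℤ), k < n →
    Vel g0 g1 k * Vel g0 g1 n * (Vel g0 g1 k)⁻¹ = Vel g0 g1 (n+1) := by
  suffices H : ∀ d : ℕ, 1 ≤ d → ∀ k : ℤ,
      Vel g0 g1 k * Vel g0 g1 (k + d) * (Vel g0 g1 k)⁻¹ = Vel g0 g1 (k + d + 1) by
    intro k n hkn
    have h1 : n = k + ((n - k).toNat : ℤ) := by omega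
    have h2 : n + 1 = k + ((n - k).toNat : ℤ) + 1 := by omega
    rw [VelC h1, VelC h2]
    exact H _ (by omega) k
  intro d
  induction d using Nat.strong_induction_on with
  | _ d IH =>
    intro hd k
    match d, hd with
    | 1, _ =>
      have h := gap1 hrel1 k
      rw [VelC (show (k + ((1:ℕ):ℤ)) = k + 1 by omega),
          VelC (show (k + ((1:ℕ):ℤ) + 1) = k + 2 by omega)]
      exact h
    | 2, _ =>
      have h := gap2 hrel2 k
      rw [VelC (show (k + ((2:ℕ):ℤ)) = k + 2 by omega),
          VelC (show (k + ((2:ℕ):ℤ) + 1) = k + 3 by omega)]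
      exact h
    | (e+3), _ =>
      have h1 : Vel g0 g1 k * Vel g0 g1 (k+(e:ℤ)+2) * (Vel g0 g1 k)⁻¹ = Vel g0 g1 (k+(e:ℤ)+3) := by
        have t := IH (e+2) (by omega) (by omega) k
        rw [VelC (show (k + ((e+2:ℕ):ℤ)) = k+(e:ℤ)+2 by omega),
            VelC (show (k + ((e+2:ℕ):ℤ) + 1) = k+(e:ℤ)+3 by omega)] at t
        exact t
      have h2 : Vel g0 g1 (k+1) * Vel g0 g1 (k+(e:ℤ)+2) * (Vel g0 g1 (k+1))⁻¹
          = Vel g0 g1 (k+(e:ℤ)+3) := by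
        have t := IH (e+1) (by omega) (by omega) (k+1)
        rw [VelC (show ((k+1) + ((e+1:ℕ):ℤ)) = k+(e:ℤ)+2 by omega),
            VelC (show ((k+1) + ((e+1:ℕ):ℤ) + 1) = k+(e:ℤ)+3 by omega)] at t
        exact t
      have h4 : Vel g0 g1 (k+2) * Vel g0 g1 (k+(e:ℤ)+3) * (Vel g0 g1 (k+2))⁻¹
          = Vel g0 g1 (k+(e:ℤ)+4) := by
        have t := IH (e+1) (by omega) (by omega) (k+2)
        rw [VelC (show ((k+2) + ((e+1:ℕ):ℤ)) = k+(e:ℤ)+3 by omega),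
            VelC (show ((k+2) + ((e+1:ℕ):ℤ) + 1) = k+(e:ℤ)+4 by omega)] at t
        exact t
      have h0 := gap1 hrel1 k
      have key : Vel g0 g1 k * (Vel g0 g1 (k+1) * Vel g0 g1 (k+(e:ℤ)+2) * (Vel g0 g1 (k+1))⁻¹) * (Vel g0 g1 k)⁻¹
          = (Vel g0 g1 k * Vel g0 g1 (k+1) * (Vel g0 g1 k)⁻¹)
            * (Vel g0 g1 k * Vel g0 g1 (k+(e:ℤ)+2) * (Vel g0 g1 k)⁻¹)
            * (Vel g0 g1 k * Vel g0 g1 (k+1) * (Vel g0 g1 k)⁻¹)⁻¹ := by group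
      rw [h0, h1] at key
      rw [VelC (show (k + ((e+3:ℕ):ℤ)) = k+(e:ℤ)+3 by omega),
          VelC (show (k + ((e+3:ℕ):ℤ) + 1) = k+(e:ℤ)+4 by omega)]
      rw [← h2, key]
      exact h4

include hrel1 hrel2 in
lemma uVu (j : ℤ) (hj : 1 ≤ j) :
    (g1⁻¹ * g0) * Vel g0 g1 j * ((g1⁻¹ * g0))⁻¹ = Vel g0 g1 j := by
  have hshift : g0 * Vel g0 g1 j * g0⁻¹ = Vel g0 g1 (j+1) := by
    have := Vel_shift (g0 := g0) (g1 := g1) 1 j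
    rw [zpow_one] at this
    rw [show (-1 : ℤ) = -(1:ℤ) by ring] at this
    rw [← this, zpow_neg, zpow_one]
  have hR : Vel g0 g1 0 * Vel g0 g1 j * (Vel g0 g1 0)⁻¹ = Vel g0 g1 (j+1) :=
    Rrel hrel1 hrel2 0 j (by omega)
  rw [Vel_zero] at hR
  calc (g1⁻¹ * g0) * Vel g0 g1 j * ((g1⁻¹ * g0))⁻¹
      = g1⁻¹ * (g0 * Vel g0 g1 j * g0⁻¹) * g1 := by group
    _ = g1⁻¹ * (g1 * Vel g0 g1 j * g1⁻¹) * g1 := by rw [hshift, ← hR]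
    _ = Vel g0 g1 j := by group

include hrel1 hrel2 in
lemma commWV (n : ℤ) (hn : 3 ≤ n) :
    ((Vel g0 g1 1)⁻¹ * Vel g0 g1 2) * Vel g0 g1 n
      = Vel g0 g1 n * ((Vel g0 g1 1)⁻¹ * Vel g0 g1 2) := by
  have h2 : Vel g0 g1 2 * Vel g0 g1 n * (Vel g0 g1 2)⁻¹ = Vel g0 g1 (n+1) :=
    Rrel hrel1 hrel2 2 n (by omega)
  have h1 : Vel g0 g1 1 * Vel g0 g1 n * (Vel g0 g1 1)⁻¹ = Vel g0 g1 (n+1) :=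
    Rrel hrel1 hrel2 1 n (by omega)
  have : (Vel g0 g1 1)⁻¹ * Vel g0 g1 2 * Vel g0 g1 n * ((Vel g0 g1 1)⁻¹ * Vel g0 g1 2)⁻¹
      = (Vel g0 g1 1)⁻¹ * (Vel g0 g1 2 * Vel g0 g1 n * (Vel g0 g1 2)⁻¹) * Vel g0 g1 1 := by group
  rw [h2, ← h1] at this
  have this2 : ((Vel g0 g1 1)⁻¹ * Vel g0 g1 2) * Vel g0 g1 n * ((Vel g0 g1 1)⁻¹ * Vel g0 g1 2)⁻¹
      = Vel g0 g1 n := by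
        have e : ((Vel g0 g1 1)⁻¹ * Vel g0 g1 2) * Vel g0 g1 n * ((Vel g0 g1 1)⁻¹ * Vel g0 g1 2)⁻¹
            = (Vel g0 g1 1)⁻¹ * Vel g0 g1 2 * Vel g0 g1 n * ((Vel g0 g1 1)⁻¹ * Vel g0 g1 2)⁻¹ := by
          group
        rw [e, this]; group
  exact comm_of_conj this2

include hrel1 hrel2 in
lemma UVU (k m : ℤ) (hk : k < m) :
    (g0^k * (g1⁻¹ * g0) * g0^(-k)) * Vel g0 g1 m * (g0^k * (g1⁻¹ * g0) * g0^(-k))⁻¹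
      = Vel g0 g1 m := by
  have hs1 : g0^(-k) * Vel g0 g1 m * g0^(-(-k)) = Vel g0 g1 (m + -k) := Vel_shift (-k) m
  rw [neg_neg] at hs1
  have hu := uVu hrel1 hrel2 (m + -k) (by omega)
  have hs2 : g0^k * Vel g0 g1 (m + -k) * g0^(-k) = Vel g0 g1 (m + -k + k) := Vel_shift k (m + -k)
  rw [VelC (show m + -k + k = m by ring)] at hs2
  calc (g0^k * (g1⁻¹ * g0) * g0^(-k)) * Vel g0 g1 m * (g0^k * (g1⁻¹ * g0) * g0^(-k))⁻¹
      = g0^k * ((g1⁻¹ * g0) * (g0^(-k) * Vel g0 g1 m * g0^k) * (g1⁻¹ * g0)⁻¹) * g0^(-k) := by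
        group
    _ = Vel g0 g1 m := by rw [hs1, hu, hs2]

include hrel1 hrel2 in
lemma commWU (k : ℤ) (hk : k ≤ 0) :
    ((Vel g0 g1 1)⁻¹ * Vel g0 g1 2) * (g0^k * (g1⁻¹ * g0) * g0^(-k))
      = (g0^k * (g1⁻¹ * g0) * g0^(-k)) * ((Vel g0 g1 1)⁻¹ * Vel g0 g1 2) := by
  set z := g0^k * (g1⁻¹ * g0) * g0^(-k) with hz
  have h1 : z * Vel g0 g1 1 * z⁻¹ = Vel g0 g1 1 := UVU hrel1 hrel2 k 1 (by omega)
  have h2 : z * Vel g0 g1 2 * z⁻¹ = Vel g0 g1 2 := UVU hrel1 hrel2 k 2 (by omega)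
  have key : z * ((Vel g0 g1 1)⁻¹ * Vel g0 g1 2) * z⁻¹
      = (z * Vel g0 g1 1 * z⁻¹)⁻¹ * (z * Vel g0 g1 2 * z⁻¹) := by group
  rw [h1, h2] at key
  exact (comm_of_conj key).symm

end rels
end GroupFacts
end UPC



namespace UPC

/-- inverse of a strictly monotone permutation is strictly monotone -/
lemma sm_inv {f : Equiv.Perm ℝ} (hf : StrictMono ⇑f) : StrictMono ⇑f⁻¹ := by
  intro x y hxy
  by_contra hc
  push_neg at hc
  have h2 : f (f⁻¹ y) ≤ f (f⁻¹ x) := hf.monotone hc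
  simp only [Equiv.Perm.apply_inv_self] at h2
  exact absurd h2 (not_le.2 hxy)

lemma perm_continuous {f : Equiv.Perm ℝ} (hf : StrictMono ⇑f) : Continuous ⇑f := by
  have h := (StrictMono.orderIsoOfSurjective ⇑f hf f.surjective).continuous
  exact h

/-- avoid a finite set on a right neighbourhood -/
lemma avoid_right (B : Finset ℝ) (e : ℝ) :
    ∃ δ : ℝ, 0 < δ ∧ ∀ x : ℝ, e < x → x < e + δ → x ∉ B := by
  classical
  set B' := B.filter (fun b => e < b) with hB'
  by_cases h : B'.Nonempty
  · refine ⟨B'.min' h - e, ?_, ?_⟩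
    · have : e < B'.min' h := (Finset.mem_filter.1 (B'.min'_mem h)).2
      linarith
    · intro x hex hxd hxB
      have hxB' : x ∈ B' := Finset.mem_filter.2 ⟨hxB, hex⟩
      have := B'.min'_le x hxB'
      linarith
  · refine ⟨1, one_pos, ?_⟩
    intro x hex _ hxB
    exact h ⟨x, Finset.mem_filter.2 ⟨hxB, hex⟩⟩

lemma avoid_left (B : Finset ℝ) (c : ℝ) :
    ∃ δ : ℝ, 0 < δ ∧ ∀ x : ℝ, c - δ < x → x < c → x ∉ B := by
  classical
  set B' := B.filter (fun b => b < c) with hB'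
  by_cases h : B'.Nonempty
  · refine ⟨c - B'.max' h, ?_, ?_⟩
    · have : B'.max' h < c := (Finset.mem_filter.1 (B'.max'_mem h)).2
      linarith
    · intro x hxd hxc hxB
      have hxB' : x ∈ B' := Finset.mem_filter.2 ⟨hxB, hxc⟩
      have := B'.le_max' x hxB'
      linarith
  · refine ⟨1, one_pos, ?_⟩
    intro x _ hxc hxB
    exact h ⟨x, Finset.mem_filter.2 ⟨hxB, hxc⟩⟩

/-- two affine functions agreeing near a point agree as coefficient pairs -/
lemma affine_germ_unique {s t s' t' x : ℝ}
    (h : ∀ᶠ y in nhds x, s * y + t = s' * y + t') : s = s' ∧ t = t' := by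
  rcases Metric.eventually_nhds_iff.1 h with ⟨ε, hε, hε'⟩
  have h1 : s * x + t = s' * x + t' := hε' (by simp [abs_of_nonneg, hε])
  have h2 : s * (x + ε/2) + t = s' * (x + ε/2) + t' := by
    apply hε'
    simp only [Real.dist_eq]
    rw [abs_of_nonneg (by linarith)]
    · linarith
  have key : s * (ε/2) = s' * (ε/2) := by nlinarith
  have hs : s = s' := by
    have hne : (ε/2 : ℝ) ≠ 0 := by positivity
    exact mul_right_cancel₀ hne key
  refine ⟨hs, ?_⟩
  rw [hs] at h1
  linarith

/-- a locally affine function on an open interval is affine there -/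
lemma affine_of_locally_affine {f : ℝ → ℝ} {p q : ℝ} (hpq : p < q)
    (h : ∀ x : ℝ, p < x → x < q → ∃ s t : ℝ, ∀ᶠ y in nhds x, f y = s * y + t) :
    ∃ s t : ℝ, ∀ x : ℝ, p < x → x < q → f x = s * x + t := by
  set x0 := (p + q) / 2 with hx0
  have hx0m : p < x0 ∧ x0 < q := by constructor <;> [simp only [hx0]; simp only [hx0]] <;> linarith
  obtain ⟨s0, t0, hs0⟩ := h x0 hx0m.1 hx0m.2
  refine ⟨s0, t0, ?_⟩
  set U : Set ℝ := {x | ∀ᶠ y in nhds x, f y = s0 * y + t0} with hU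
  set V : Set ℝ := {x | ∃ s t : ℝ, (∀ᶠ y in nhds x, f y = s * y + t) ∧ ¬(s = s0 ∧ t = t0)} with hV
  have hUopen : IsOpen U := by
    rw [isOpen_iff_mem_nhds]
    intro x hx
    exact hx.eventually_nhds
  have hVopen : IsOpen V := by
    rw [isOpen_iff_mem_nhds]
    intro x hx
    obtain ⟨s, t, hst, hne⟩ := hx
    filter_upwards [hst.eventually_nhds] with y hy
    exact ⟨s, t, hy, hne⟩
  have hsub : Ioo p q ⊆ U ∪ V := by
    intro x hx
    obtain ⟨s, t, hst⟩ := h x hx.1 hx.2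
    by_cases hc : s = s0 ∧ t = t0
    · left
      rw [hc.1, hc.2] at hst
      exact hst
    · right
      exact ⟨s, t, hst, hc⟩
  have hdisj : Ioo p q ∩ (U ∩ V) = ∅ := by
    ext x
    simp only [mem_inter_iff, mem_empty_iff_false, iff_false, not_and]
    intro _ hxU hxV
    obtain ⟨s, t, hst, hne⟩ := hxV
    have : ∀ᶠ y in nhds x, s * y + t = s0 * y + t0 := by
      filter_upwards [hst, hxU] with y h1 h2
      rw [← h1, h2]
    exact hne (affine_germ_unique this)
  have hUne : (Ioo p q ∩ U).Nonempty := ⟨x0, ⟨hx0m.1, hx0m.2⟩, hs0⟩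
  have hVempty : Ioo p q ∩ V = ∅ := by
    by_contra hne
    obtain ⟨x, hx⟩ := nonempty_iff_ne_empty.2 hne
    have := isPreconnected_Ioo (a := p) (b := q) U V hUopen hVopen hsub hUne ⟨x, hx⟩
    rw [hdisj] at this
    exact not_nonempty_empty this
  intro x hp hq
  have hxU : x ∈ U := by
    rcases hsub ⟨hp, hq⟩ with h | h
    · exact h
    · exact absurd (mem_inter (mem_Ioo.2 ⟨hp, hq⟩ : x ∈ Ioo p q) h) (by rw [hVempty]; simp)
  exact hxU.self_of_nhds

end UPC

namespace UPC


lemma window_right_raw {f : Equiv.Perm ℝ} (hf : IsPL0 f) (e : ℝ) :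
    ∃ s t δ : ℝ, 0 < δ ∧ ∀ x : ℝ, e < x → x < e + δ → f x = s * x + t := by
  obtain ⟨B, hB⟩ := hf.2.2.2
  obtain ⟨δ, hδ, hav⟩ := avoid_right B e
  obtain ⟨s, t, hst⟩ := affine_of_locally_affine (f := ⇑f) (p := e) (q := e + δ)
    (by linarith) (fun x hx1 hx2 => hB x (hav x hx1 hx2))
  exact ⟨s, t, δ, hδ, hst⟩

lemma window_left_raw {f : Equiv.Perm ℝ} (hf : IsPL0 f) (c : ℝ) :
    ∃ s t δ : ℝ, 0 < δ ∧ ∀ x : ℝ, c - δ < x → x < c → f x = s * x + t := by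
  obtain ⟨B, hB⟩ := hf.2.2.2
  obtain ⟨δ, hδ, hav⟩ := avoid_left B c
  obtain ⟨s, t, hst⟩ := affine_of_locally_affine (f := ⇑f) (p := c - δ) (q := c)
    (by linarith) (fun x hx1 hx2 => hB x (hav x hx1 hx2))
  exact ⟨s, t, δ, hδ, fun x h1 h2 => hst x h1 h2⟩

lemma window_right_fix {f : Equiv.Perm ℝ} (hf : IsPL0 f) {e : ℝ} (hfe : f e = e) :
    ∃ s δ : ℝ, 0 < s ∧ 0 < δ ∧ ∀ x : ℝ, e < x → x < e + δ → f x = e + s * (x - e) := by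
  obtain ⟨s, t, δ, hδ, hst⟩ := window_right_raw hf e
  have hcont : ContinuousAt ⇑f e := (perm_continuous hf.1).continuousAt
  have ht1 : Tendsto ⇑f (nhdsWithin e (Ioi e)) (nhds (f e)) :=
    hcont.continuousWithinAt.tendsto
  rw [hfe] at ht1
  have ht2 : Tendsto (fun x => s * x + t) (nhdsWithin e (Ioi e)) (nhds (s * e + t)) := by
    have hc : Continuous (fun x : ℝ => s * x + t) := by continuity
    have h2 := hc.tendsto e
    exact h2.mono_left nhdsWithin_le_nhds
  have hev : ⇑f =ᶠ[nhdsWithin e (Ioi e)] (fun x => s * x + t) := by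
    filter_upwards [Ioo_mem_nhdsGT_of_mem (show e ∈ Ico e (e + δ) from ⟨le_refl e, by linarith⟩)]
      with x hx
    exact hst x hx.1 hx.2
  have heq : s * e + t = e := by
    have ht1' : Tendsto (fun x => s * x + t) (nhdsWithin e (Ioi e)) (nhds e) :=
      Tendsto.congr' hev ht1
    exact tendsto_nhds_unique ht2 ht1'
  have hform : ∀ x : ℝ, e < x → x < e + δ → f x = e + s * (x - e) := by
    intro x h1 h2
    rw [hst x h1 h2]
    have : t = e - s * e := by linarith
    rw [this]; ring
  have hspos : 0 < s := by
    have h1 : f (e + δ/3) < f (e + δ/2) := hf.1 (by linarith)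
    rw [hform _ (by linarith) (by linarith), hform _ (by linarith) (by linarith)] at h1
    nlinarith
  exact ⟨s, δ, hspos, hδ, hform⟩

lemma window_left_fix {f : Equiv.Perm ℝ} (hf : IsPL0 f) {c : ℝ} (hfc : f c = c) :
    ∃ s δ : ℝ, 0 < s ∧ 0 < δ ∧ ∀ x : ℝ, c - δ < x → x < c → f x = c + s * (x - c) := by
  obtain ⟨s, t, δ, hδ, hst⟩ := window_left_raw hf c
  have hcont : ContinuousAt ⇑f c := (perm_continuous hf.1).continuousAt
  have ht1 : Tendsto ⇑f (nhdsWithin c (Iio c)) (nhds (f c)) :=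
    hcont.continuousWithinAt.tendsto
  rw [hfc] at ht1
  have ht2 : Tendsto (fun x => s * x + t) (nhdsWithin c (Iio c)) (nhds (s * c + t)) := by
    have hc : Continuous (fun x : ℝ => s * x + t) := by continuity
    have h2 := hc.tendsto c
    exact h2.mono_left nhdsWithin_le_nhds
  have hev : ⇑f =ᶠ[nhdsWithin c (Iio c)] (fun x => s * x + t) := by
    filter_upwards [Ioo_mem_nhdsLT_of_mem (show c ∈ Ioc (c - δ) c from ⟨by linarith, le_refl c⟩)]
      with x hx
    exact hst x hx.1 hx.2
  have heq : s * c + t = c := by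
    have ht1' : Tendsto (fun x => s * x + t) (nhdsWithin c (Iio c)) (nhds c) :=
      Tendsto.congr' hev ht1
    exact tendsto_nhds_unique ht2 ht1'
  have hform : ∀ x : ℝ, c - δ < x → x < c → f x = c + s * (x - c) := by
    intro x h1 h2
    rw [hst x h1 h2]
    have : t = c - s * c := by linarith
    rw [this]; ring
  have hspos : 0 < s := by
    have h1 : f (c - δ/2) < f (c - δ/3) := hf.1 (by linarith)
    rw [hform _ (by linarith) (by linarith), hform _ (by linarith) (by linarith)] at h1
    nlinarith
  exact ⟨s, δ, hspos, hδ, hform⟩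

/-- `f` has a left-window at `c` with slope `s`. -/
def LWin (c : ℝ) (f : Equiv.Perm ℝ) (s : ℝ) : Prop :=
  0 < s ∧ ∃ δ : ℝ, 0 < δ ∧ ∀ x : ℝ, c - δ < x → x < c → f x = c + s * (x - c)

lemma LWin_unique {c : ℝ} {f : Equiv.Perm ℝ} {s s' : ℝ}
    (h : LWin c f s) (h' : LWin c f s') : s = s' := by
  obtain ⟨_, δ, hδ, hw⟩ := h
  obtain ⟨_, δ', hδ', hw'⟩ := h'
  set x := c - min δ δ' / 2 with hx
  have hmin : 0 < min δ δ' := lt_min hδ hδ'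
  have h1 : c - δ < x := by
    have : min δ δ' ≤ δ := min_le_left _ _
    simp only [hx]; linarith
  have h2 : c - δ' < x := by
    have : min δ δ' ≤ δ' := min_le_right _ _
    simp only [hx]; linarith
  have h3 : x < c := by simp only [hx]; linarith
  have := (hw x h1 h3).symm.trans (hw' x h2 h3)
  have hxc : x - c ≠ 0 := by simp only [hx]; intro hc; linarith
  have : s * (x - c) = s' * (x - c) := by linarith
  exact mul_right_cancel₀ hxc this

lemma LWin_one (c : ℝ) : LWin c 1 1 :=
  ⟨one_pos, 1, one_pos, fun x _ _ => by simp⟩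

lemma LWin_mul {c : ℝ} {f g : Equiv.Perm ℝ} {s t : ℝ}
    (hf : LWin c f s) (hg : LWin c g t) : LWin c (f * g) (s * t) := by
  obtain ⟨hs, δf, hδf, hwf⟩ := hf
  obtain ⟨ht, δg, hδg, hwg⟩ := hg
  refine ⟨mul_pos hs ht, min δg (δf / t), lt_min hδg (div_pos hδf ht), ?_⟩
  intro x h1 h2
  have hmg : min δg (δf / t) ≤ δg := min_le_left _ _
  have hmf : min δg (δf / t) ≤ δf / t := min_le_right _ _
  have hxg1 : c - δg < x := by linarith
  have hgx : g x = c + t * (x - c) := hwg x hxg1 h2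
  have hgx1 : c - δf < g x := by
    rw [hgx]
    have hlt : c - x < δf / t := by linarith
    have h3 : t * (c - x) < t * (δf / t) := mul_lt_mul_of_pos_left hlt ht
    have h4 : t * (δf / t) = δf := by field_simp
    nlinarith
  have hgx2 : g x < c := by
    rw [hgx]
    nlinarith
  have : (f * g) x = f (g x) := Equiv.Perm.mul_apply f g x
  rw [this, hwf (g x) hgx1 hgx2, hgx]
  ring

end UPC

namespace UPC

lemma affine_id_of_two_fixed {f : Equiv.Perm ℝ} {s t p q x1 x2 : ℝ}
    (haff : ∀ x : ℝ, p < x → x < q → f x = s * x + t)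
    (h1 : p < x1) (h1' : x1 < q) (h2 : p < x2) (h2' : x2 < q) (hne : x1 ≠ x2)
    (hf1 : f x1 = x1) (hf2 : f x2 = x2) : ∀ x : ℝ, p < x → x < q → f x = x := by
  have e1 : s * x1 + t = x1 := by rw [← haff x1 h1 h1']; exact hf1
  have e2 : s * x2 + t = x2 := by rw [← haff x2 h2 h2']; exact hf2
  have hs : s * (x1 - x2) = 1 * (x1 - x2) := by ring_nf; nlinarith
  have hs1 : s = 1 := mul_right_cancel₀ (sub_ne_zero.2 hne) hs
  have ht0 : t = 0 := by rw [hs1] at e1; linarith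
  intro x hx1 hx2
  rw [haff x hx1 hx2, hs1, ht0]; ring

lemma fix_sSup_seq {z : Equiv.Perm ℝ} (hz : StrictMono ⇑z) {τ : ℕ → ℝ}
    (hbdd : BddAbove (range τ)) (hfix : ∀ n, z (τ n) = τ n) :
    z (sSup (range τ)) = sSup (range τ) := by
  have hne : (range τ).Nonempty := range_nonempty τ
  have hub1 : sSup (range τ) ≤ z (sSup (range τ)) := by
    apply csSup_le hne
    rintro x ⟨n, rfl⟩
    calc τ n = z (τ n) := (hfix n).symm
      _ ≤ z (sSup (range τ)) := hz.monotone (le_csSup hbdd ⟨n, rfl⟩)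
  have hub2 : sSup (range τ) ≤ z⁻¹ (sSup (range τ)) := by
    apply csSup_le hne
    rintro x ⟨n, rfl⟩
    have : τ n = z⁻¹ (τ n) := by
      have h0 := congrArg ⇑(z⁻¹) (hfix n)
      rw [Equiv.Perm.inv_apply_self] at h0
      exact h0
    calc τ n = z⁻¹ (τ n) := this
      _ ≤ z⁻¹ (sSup (range τ)) := (sm_inv hz).monotone (le_csSup hbdd ⟨n, rfl⟩)
  have h3 : z (sSup (range τ)) ≤ z (z⁻¹ (sSup (range τ))) := hz.monotone hub2
  rw [Equiv.Perm.apply_inv_self] at h3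
  exact le_antisymm h3 hub1

lemma fix_sInf_seq {z : Equiv.Perm ℝ} (hz : StrictMono ⇑z) {τ : ℕ → ℝ}
    (hbdd : BddBelow (range τ)) (hfix : ∀ n, z (τ n) = τ n) :
    z (sInf (range τ)) = sInf (range τ) := by
  have hne : (range τ).Nonempty := range_nonempty τ
  have hub1 : z (sInf (range τ)) ≤ sInf (range τ) := by
    apply le_csInf hne
    rintro x ⟨n, rfl⟩
    calc z (sInf (range τ)) ≤ z (τ n) := hz.monotone (csInf_le hbdd ⟨n, rfl⟩)
      _ = τ n := hfix n
  have hub2 : z⁻¹ (sInf (range τ)) ≤ sInf (range τ) := by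
    apply le_csInf hne
    rintro x ⟨n, rfl⟩
    have : τ n = z⁻¹ (τ n) := by
      have h0 := congrArg ⇑(z⁻¹) (hfix n)
      rw [Equiv.Perm.inv_apply_self] at h0
      exact h0
    calc z⁻¹ (sInf (range τ)) ≤ z⁻¹ (τ n) := (sm_inv hz).monotone (csInf_le hbdd ⟨n, rfl⟩)
      _ = τ n := this.symm
  have h3 : z (z⁻¹ (sInf (range τ))) ≤ z (sInf (range τ)) := hz.monotone hub2
  rw [Equiv.Perm.apply_inv_self] at h3
  exact le_antisymm hub1 h3

lemma shift_sSup_seq {z : Equiv.Perm ℝ} (hz : StrictMono ⇑z) {τ : ℕ → ℝ}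
    (hbdd : BddAbove (range τ)) (hmono : Monotone τ)
    (hshift : ∀ n, z (τ n) = τ (n+1)) :
    z (sSup (range τ)) = sSup (range τ) := by
  have hne : (range τ).Nonempty := range_nonempty τ
  have hub1 : sSup (range τ) ≤ z (sSup (range τ)) := by
    apply csSup_le hne
    rintro x ⟨n, rfl⟩
    calc τ n ≤ τ (n+1) := hmono (Nat.le_succ n)
      _ = z (τ n) := (hshift n).symm
      _ ≤ z (sSup (range τ)) := hz.monotone (le_csSup hbdd ⟨n, rfl⟩)
  have hub2 : sSup (range τ) ≤ z⁻¹ (sSup (range τ)) := by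
    apply csSup_le hne
    rintro x ⟨n, rfl⟩
    have e : τ n = z⁻¹ (τ (n+1)) := by
      conv_lhs => rw [show τ n = z⁻¹ (z (τ n)) from (Equiv.Perm.inv_apply_self z (τ n)).symm]
      rw [hshift n]
    calc τ n = z⁻¹ (τ (n+1)) := e
      _ ≤ z⁻¹ (sSup (range τ)) := (sm_inv hz).monotone (le_csSup hbdd ⟨n+1, rfl⟩)
  have h3 : z (sSup (range τ)) ≤ z (z⁻¹ (sSup (range τ))) := hz.monotone hub2
  rw [Equiv.Perm.apply_inv_self] at h3
  exact le_antisymm h3 hub1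

lemma shift_sInf_seq {z : Equiv.Perm ℝ} (hz : StrictMono ⇑z) {τ : ℕ → ℝ}
    (hbdd : BddBelow (range τ)) (hmono : Antitone τ)
    (hshift : ∀ n, z (τ n) = τ (n+1)) :
    z (sInf (range τ)) = sInf (range τ) := by
  have hne : (range τ).Nonempty := range_nonempty τ
  have hub1 : z (sInf (range τ)) ≤ sInf (range τ) := by
    apply le_csInf hne
    rintro x ⟨n, rfl⟩
    calc z (sInf (range τ)) ≤ z (τ n) := hz.monotone (csInf_le hbdd ⟨n, rfl⟩)
      _ = τ (n+1) := hshift n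
      _ ≤ τ n := hmono (Nat.le_succ n)
  have hub2 : z⁻¹ (sInf (range τ)) ≤ sInf (range τ) := by
    apply le_csInf hne
    rintro x ⟨n, rfl⟩
    have e : z⁻¹ (τ (n+1)) = τ n := by
      conv_rhs => rw [show τ n = z⁻¹ (z (τ n)) from (Equiv.Perm.inv_apply_self z (τ n)).symm]
      rw [hshift n]
    calc z⁻¹ (sInf (range τ)) ≤ z⁻¹ (τ (n+1)) := (sm_inv hz).monotone (csInf_le hbdd ⟨n+1, rfl⟩)
      _ = τ n := e
  have h3 : z (z⁻¹ (sInf (range τ))) ≤ z (sInf (range τ)) := hz.monotone hub2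
  rw [Equiv.Perm.apply_inv_self] at h3
  exact le_antisymm hub1 h3

end UPC



namespace UPC


lemma fix_sSup_set {z : Equiv.Perm ℝ} (hz : StrictMono ⇑z) {S : Set ℝ}
    (hne : S.Nonempty) (hbdd : BddAbove S)
    (h1 : ∀ x ∈ S, z x ∈ S) (h2 : ∀ x ∈ S, z⁻¹ x ∈ S) : z (sSup S) = sSup S := by
  have hub1 : sSup S ≤ z (sSup S) := by
    apply csSup_le hne
    intro x hx
    have hx' : z⁻¹ x ≤ sSup S := le_csSup hbdd (h2 x hx)
    calc x = z (z⁻¹ x) := (Equiv.Perm.apply_inv_self z x).symm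
      _ ≤ z (sSup S) := hz.monotone hx'
  have hub2 : sSup S ≤ z⁻¹ (sSup S) := by
    apply csSup_le hne
    intro x hx
    have hx' : z x ≤ sSup S := le_csSup hbdd (h1 x hx)
    calc x = z⁻¹ (z x) := (Equiv.Perm.inv_apply_self z x).symm
      _ ≤ z⁻¹ (sSup S) := (sm_inv hz).monotone hx'
  have h3 : z (sSup S) ≤ z (z⁻¹ (sSup S)) := hz.monotone hub2
  rw [Equiv.Perm.apply_inv_self] at h3
  exact le_antisymm h3 hub1

/-- product of two maps each identity on a right neighbourhood of `a` -/
lemma idnr_mul {a : ℝ} {f g : Equiv.Perm ℝ}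
    (hf : ∃ δ : ℝ, 0 < δ ∧ ∀ x : ℝ, a < x → x < a + δ → f x = x)
    (hg : ∃ δ : ℝ, 0 < δ ∧ ∀ x : ℝ, a < x → x < a + δ → g x = x) :
    ∃ δ : ℝ, 0 < δ ∧ ∀ x : ℝ, a < x → x < a + δ → (f * g) x = x := by
  obtain ⟨δf, hδf, hwf⟩ := hf
  obtain ⟨δg, hδg, hwg⟩ := hg
  refine ⟨min δf δg, lt_min hδf hδg, ?_⟩
  intro x h1 h2
  have hxf : x < a + δf := lt_of_lt_of_le h2 (by linarith [min_le_left δf δg])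
  have hxg : x < a + δg := lt_of_lt_of_le h2 (by linarith [min_le_right δf δg])
  rw [Equiv.Perm.mul_apply, hwg x h1 hxg, hwf x h1 hxf]

lemma idnr_conj {a : ℝ} {k z : Equiv.Perm ℝ}
    (hk : ∃ δ : ℝ, 0 < δ ∧ ∀ x : ℝ, a < x → x < a + δ → k x = x)
    (hzm : StrictMono ⇑z) (hza : z a = a) :
    ∃ δ : ℝ, 0 < δ ∧ ∀ x : ℝ, a < x → x < a + δ → (z⁻¹ * k * z) x = x := by
  obtain ⟨δk, hδk, hwk⟩ := hk
  refine ⟨z⁻¹ (a + δk) - a, ?_, ?_⟩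
  · have h1 : z⁻¹ a < z⁻¹ (a + δk) := (sm_inv hzm) (by linarith)
    have h2 : z⁻¹ a = a := by
      have h := congrArg ⇑z⁻¹ hza
      rw [Equiv.Perm.inv_apply_self] at h
      exact h.symm
    rw [h2] at h1
    linarith
  · intro x hx1 hx2
    have hzx1 : a < z x := by
      have := hzm hx1
      rwa [hza] at this
    have hzx2 : z x < a + δk := by
      have h3 : x < z⁻¹ (a + δk) := by linarith
      have := hzm h3
      rwa [Equiv.Perm.apply_inv_self] at this
    rw [Equiv.Perm.mul_apply, Equiv.Perm.mul_apply, hwk (z x) hzx1 hzx2,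
      Equiv.Perm.inv_apply_self]

section GroupFacts2
variable {G : Type*} [Group G] {g0 g1 : G}


lemma Vel_one : Vel g0 g1 1 = g0 * g1 * g0⁻¹ := by
  show g0^(1:ℤ) * g1 * g0^(-1:ℤ) = _
  group

lemma Vel_two : Vel g0 g1 2 = g0^2 * g1 * (g0^2)⁻¹ := by
  show g0^(2:ℤ) * g1 * g0^(-2:ℤ) = _
  group

lemma Vel_succ (n : ℤ) : g0 * Vel g0 g1 n * g0⁻¹ = Vel g0 g1 (n+1) := by
  show g0 * (g0^n * g1 * g0^(-n)) * g0⁻¹ = g0^(n+1) * g1 * g0^(-(n+1))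
  rw [zpow_add, show (-(n+1)) = -n + -1 by ring, zpow_add]
  group

lemma u_pow_comm (n : ℤ) :
    (g1⁻¹ * g0) * g0^n = g0^n * (g0^(-n) * (g1⁻¹ * g0) * g0^(-(-n))) := by
  rw [neg_neg]
  group

lemma v3_pow_comm (j : ℤ) :
    Vel g0 g1 3 * g0^(-j) = g0^(-j) * Vel g0 g1 (3+j) := by
  show (g0^(3:ℤ) * g1 * g0^(-3:ℤ)) * g0^(-j) = g0^(-j) * (g0^(3+j) * g1 * g0^(-(3+j)))
  rw [zpow_add, show (-(3+j)) = -3 + -j by ring, zpow_add]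
  group

lemma g1_from_V3 : g0^(-3:ℤ) * Vel g0 g1 3 * g0^(3:ℤ) = g1 := by
  show g0^(-3:ℤ) * (g0^(3:ℤ) * g1 * g0^(-3:ℤ)) * g0^(3:ℤ) = g1
  group

lemma g0_eq_g1_mul_u : g1 * (g1⁻¹ * g0) = g0 := by group

end GroupFacts2

end UPC

/-- Partial converse of Brin's Ubiquity theorem: if a subgroup `H` of `PL₀(I)` is
isomorphic to Thompson's group `F`, then `H` has an orbital `W = (a,c)` and an
element `h` which moves points arbitrarily close to one endpoint of `W` but fixes
pointwise a neighborhood (within `W`) of the other endpoint. -/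
theorem ubiquity_partial_converse (H : Subgroup (Equiv.Perm ℝ))
    (hH : ∀ f ∈ H, IsPL0 f) (hiso : Nonempty (ThompsonF ≃* H)) :
    ∃ a c : ℝ, IsSubgroupOrbital H a c ∧ ∃ h ∈ H,
      (((∀ ε > (0 : ℝ), ∃ x ∈ Set.Ioo a c, x < a + ε ∧ h x ≠ x) ∧
          (∃ q ∈ Set.Ioo a c, ∀ x ∈ Set.Ioo q c, h x = x)) ∨
        ((∀ ε > (0 : ℝ), ∃ x ∈ Set.Ioo a c, c - ε < x ∧ h x ≠ x) ∧
          (∃ q ∈ Set.Ioo a c, ∀ x ∈ Set.Ioo a q, h x = x))) := by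
  classical
  obtain ⟨θ⟩ := hiso
  set G0 : ↥H := θ (PresentedGroup.of 0) with hG0
  set G1 : ↥H := θ (PresentedGroup.of 1) with hG1
  set p0 : Equiv.Perm ℝ := (G0 : Equiv.Perm ℝ) with hp0
  set p1 : Equiv.Perm ℝ := (G1 : Equiv.Perm ℝ) with hp1
  have hp0H : p0 ∈ H := G0.2
  have hp1H : p1 ∈ H := G1.2
  -- relators in the subgroup
  have hrel1H : (G1⁻¹ * G0) * (G0 * G1 * G0⁻¹) = (G0 * G1 * G0⁻¹) * (G1⁻¹ * G0) := by
    have h2 := congrArg θ UPC.TF_rel1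
    simpa only [map_mul, map_inv] using h2
  have hrel2H : (G1⁻¹ * G0) * (G0^2 * G1 * (G0^2)⁻¹) = (G0^2 * G1 * (G0^2)⁻¹) * (G1⁻¹ * G0) := by
    have h2 := congrArg θ UPC.TF_rel2
    simpa only [map_mul, map_inv, map_pow] using h2
  -- relators at the permutation level
  have hrel1 : (p1⁻¹ * p0) * (p0 * p1 * p0⁻¹) = (p0 * p1 * p0⁻¹) * (p1⁻¹ * p0) := by
    have h2 := congrArg (fun x : ↥H => (x : Equiv.Perm ℝ)) hrel1H
    simpa only [Subgroup.coe_mul, Subgroup.coe_inv] using h2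
  have hrel2 : (p1⁻¹ * p0) * (p0^2 * p1 * (p0^2)⁻¹) = (p0^2 * p1 * (p0^2)⁻¹) * (p1⁻¹ * p0) := by
    have h2 := congrArg (fun x : ↥H => (x : Equiv.Perm ℝ)) hrel2H
    simpa only [Subgroup.coe_mul, Subgroup.coe_inv, SubmonoidClass.coe_pow] using h2
  -- the element w = v₁⁻¹ v₂ is nontrivial
  have hVne : UPC.Vel p0 p1 1 ≠ UPC.Vel p0 p1 2 := by
    intro h
    rw [UPC.Vel_one, UPC.Vel_two] at h
    have hHlevel : (G0 * G1 * G0⁻¹ : ↥H) = G0^2 * G1 * (G0^2)⁻¹ := by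
      apply Subtype.ext
      simpa only [Subgroup.coe_mul, Subgroup.coe_inv, SubmonoidClass.coe_pow] using h
    apply UPC.TF_v1_ne_v2
    apply θ.injective
    simpa only [map_mul, map_inv, map_pow] using hHlevel
  set wp : Equiv.Perm ℝ := (UPC.Vel p0 p1 1)⁻¹ * UPC.Vel p0 p1 2 with hwp
  -- membership bookkeeping
  have hmemV : ∀ n : ℤ, UPC.Vel p0 p1 n ∈ H := by
    intro n
    exact H.mul_mem (H.mul_mem (H.zpow_mem hp0H n) hp1H) (H.zpow_mem hp0H (-n))
  have hmemu : (p1⁻¹ * p0) ∈ H := H.mul_mem (H.inv_mem hp1H) hp0H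
  have hmemU : ∀ k : ℤ, (p0^k * (p1⁻¹ * p0) * p0^(-k)) ∈ H := fun k =>
    H.mul_mem (H.mul_mem (H.zpow_mem hp0H k) hmemu) (H.zpow_mem hp0H (-k))
  have hmemw : wp ∈ H := H.mul_mem (H.inv_mem (hmemV 1)) (hmemV 2)
  have hwpne : wp ≠ 1 := by
    intro h
    rw [hwp, inv_mul_eq_one] at h
    exact hVne h
  obtain ⟨xstar, hxstar⟩ : ∃ x : ℝ, wp x ≠ x := by
    by_contra hc
    push_neg at hc
    exact hwpne (Equiv.ext fun x => (hc x).trans (Equiv.Perm.one_apply x).symm)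
  -- global fixed set
  set P : Set ℝ := ⋂ f ∈ H, {y : ℝ | f y = y} with hP
  have hPmem : ∀ y : ℝ, y ∈ P ↔ ∀ f ∈ H, f y = y := by
    intro y
    simp only [hP, Set.mem_iInter, Set.mem_setOf_eq]
  have hP0 : (0 : ℝ) ∈ P := (hPmem 0).2 (fun f hf => (hH f hf).2.1 0 (le_refl 0))
  have hP1 : (1 : ℝ) ∈ P := (hPmem 1).2 (fun f hf => (hH f hf).2.2.1 1 (le_refl 1))
  have hPclosed : IsClosed P := by
    apply isClosed_biInter
    intro f hf
    exact isClosed_eq (UPC.perm_continuous (hH f hf).1) continuous_id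
  have hxstar0 : 0 < xstar := by
    by_contra hc
    push_neg at hc
    exact hxstar ((hH wp hmemw).2.1 xstar hc)
  have hxstar1 : xstar < 1 := by
    by_contra hc
    push_neg at hc
    exact hxstar ((hH wp hmemw).2.2.1 xstar hc)
  set a : ℝ := sSup (P ∩ Set.Iic xstar) with ha
  set c : ℝ := sInf (P ∩ Set.Ici xstar) with hc
  have hane : (P ∩ Set.Iic xstar).Nonempty := ⟨0, hP0, le_of_lt hxstar0⟩
  have hcne : (P ∩ Set.Ici xstar).Nonempty := ⟨1, hP1, le_of_lt hxstar1⟩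
  have habdd : BddAbove (P ∩ Set.Iic xstar) := ⟨xstar, fun y hy => hy.2⟩
  have hcbdd : BddBelow (P ∩ Set.Ici xstar) := ⟨xstar, fun y hy => hy.2⟩
  have haP : a ∈ P ∩ Set.Iic xstar :=
    (hPclosed.inter isClosed_Iic).csSup_mem hane habdd
  have hcP : c ∈ P ∩ Set.Ici xstar :=
    (hPclosed.inter isClosed_Ici).csInf_mem hcne hcbdd
  have hfixa : ∀ f ∈ H, f a = a := fun f hf => (hPmem a).1 haP.1 f hf
  have hfixc : ∀ f ∈ H, f c = c := fun f hf => (hPmem c).1 hcP.1 f hf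
  have hxsnP : xstar ∉ P := fun hx => hxstar ((hPmem xstar).1 hx wp hmemw)
  have haxs : a < xstar := lt_of_le_of_ne haP.2 (fun h => hxsnP (h ▸ haP.1))
  have hxsc : xstar < c := lt_of_le_of_ne hcP.2 (fun h => hxsnP (h ▸ hcP.1))
  have hac : a < c := lt_trans haxs hxsc
  have horb : Set.Ioo a c ⊆ SuppSubgroup H := by
    intro y hy
    by_contra hyn
    have hyP : y ∈ P := by
      rw [hPmem]
      intro f hf
      by_contra hfy
      exact hyn ⟨f, hf, hfy⟩
    rcases le_or_gt y xstar with hyx | hyx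
    · have : y ≤ a := le_csSup habdd ⟨hyP, hyx⟩
      linarith [hy.1]
    · have : c ≤ y := csInf_le hcbdd ⟨hyP, le_of_lt hyx⟩
      linarith [hy.2]
  refine ⟨a, c, ⟨hac, horb, hfixa, hfixc⟩, ?_⟩
  by_contra hcon
  push_neg at hcon
  -- every element of H maps (a,c) into itself
  have hmapIoo : ∀ f ∈ H, ∀ y ∈ Set.Ioo a c, f y ∈ Set.Ioo a c := by
    intro f hf y hy
    constructor
    · have := (hH f hf).1 hy.1
      rwa [hfixa f hf] at this
    · have := (hH f hf).1 hy.2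
      rwa [hfixc f hf] at this
  -- the failure hypothesis: identity near c implies identity near a
  have hfail : ∀ z ∈ H, (∃ δ : ℝ, 0 < δ ∧ ∀ x : ℝ, c - δ < x → x < c → z x = x) →
      (∃ δ : ℝ, 0 < δ ∧ ∀ x : ℝ, a < x → x < a + δ → z x = x) := by
    intro z hz ⟨δc, hδc, hidc⟩
    by_contra hKa
    -- affine window at a⁺
    obtain ⟨s, δ', hs, hδ', hform⟩ := UPC.window_right_fix (hH z hz) (hfixa z hz)
    have hs1 : s ≠ 1 := by
      intro h1
      apply hKa
      refine ⟨δ', hδ', fun x hx1 hx2 => ?_⟩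
      rw [hform x hx1 hx2, h1]
      ring
    have hmoves : ∀ ε > (0:ℝ), ∃ x ∈ Set.Ioo a c, x < a + ε ∧ z x ≠ x := by
      intro ε hε
      set x := a + min (min ε δ') (c - a) / 2 with hx
      have hmpos : 0 < min (min ε δ') (c - a) := lt_min (lt_min hε hδ') (by linarith)
      have hx1 : a < x := by rw [hx]; linarith
      have hx2 : x < a + δ' := by
        have h3 : min (min ε δ') (c - a) ≤ δ' := le_trans (min_le_left _ _) (min_le_right _ _)
        rw [hx]; linarith
      have hx3 : x < a + ε := by
        have h3 : min (min ε δ') (c - a) ≤ ε := le_trans (min_le_left _ _) (min_le_left _ _)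
        rw [hx]; linarith
      have hx4 : x < c := by
        have h3 : min (min ε δ') (c - a) ≤ c - a := min_le_right _ _
        rw [hx]; linarith
      refine ⟨x, ⟨hx1, hx4⟩, hx3, ?_⟩
      rw [hform x hx1 hx2]
      intro heq
      have hxa : x - a ≠ 0 := sub_ne_zero.2 (ne_of_gt hx1)
      apply hs1
      have h5 : s * (x - a) = 1 * (x - a) := by linarith
      exact mul_right_cancel₀ hxa h5
    have htail := (hcon z hz).1 hmoves
    set q : ℝ := max (c - δc) ((a+c)/2) with hqdef
    have hqIoo : q ∈ Set.Ioo a c := by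
      constructor
      · exact lt_max_of_lt_right (by linarith)
      · exact max_lt (by linarith) (by linarith)
    obtain ⟨x, hxIoo, hxne⟩ := htail q hqIoo
    exact hxne (hidc x (lt_of_le_of_lt (le_max_left _ _) hxIoo.1) hxIoo.2)
  -- slope data at c⁻ : wp is the identity near c
  have hLW : ∀ f ∈ H, ∃ s : ℝ, UPC.LWin c f s := by
    intro f hf
    obtain ⟨s, δ, hs, hδ, hfo⟩ := UPC.window_left_fix (hH f hf) (hfixc f hf)
    exact ⟨s, hs, δ, hδ, hfo⟩
  obtain ⟨s0, hl0⟩ := hLW p0 hp0H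
  obtain ⟨s1, hl1⟩ := hLW p1 hp1H
  obtain ⟨s0', hl0'⟩ := hLW p0⁻¹ (H.inv_mem hp0H)
  have hs00' : s0 * s0' = 1 := by
    have h1 : UPC.LWin c (p0 * p0⁻¹) (s0 * s0') := UPC.LWin_mul hl0 hl0'
    rw [mul_inv_cancel] at h1
    exact UPC.LWin_unique h1 (UPC.LWin_one c)
  have hlV1 : UPC.LWin c (UPC.Vel p0 p1 1) (s0 * s1 * s0') := by
    rw [UPC.Vel_one]
    exact UPC.LWin_mul (UPC.LWin_mul hl0 hl1) hl0'
  have hlV2 : UPC.LWin c (UPC.Vel p0 p1 2) (s0 * (s0 * s1 * s0') * s0') := by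
    have h2 : UPC.Vel p0 p1 2 = p0 * UPC.Vel p0 p1 1 * p0⁻¹ := (UPC.Vel_succ 1).symm
    rw [h2]
    exact UPC.LWin_mul (UPC.LWin_mul hl0 hlV1) hl0'
  obtain ⟨sV1i, hlV1i⟩ := hLW (UPC.Vel p0 p1 1)⁻¹ (H.inv_mem (hmemV 1))
  have hsV1i : (s0 * s1 * s0') * sV1i = 1 := by
    have h1 : UPC.LWin c (UPC.Vel p0 p1 1 * (UPC.Vel p0 p1 1)⁻¹) ((s0 * s1 * s0') * sV1i) :=
      UPC.LWin_mul hlV1 hlV1i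
    rw [mul_inv_cancel] at h1
    exact UPC.LWin_unique h1 (UPC.LWin_one c)
  have hlw : UPC.LWin c wp 1 := by
    have h1 : UPC.LWin c wp (sV1i * (s0 * (s0 * s1 * s0') * s0')) := UPC.LWin_mul hlV1i hlV2
    have h2 : sV1i * (s0 * (s0 * s1 * s0') * s0') = 1 := by
      have e1 : sV1i * (s0 * (s0 * s1 * s0') * s0') = (sV1i * (s0 * s1 * s0')) * (s0 * s0') := by
        ring
      have e2 : sV1i * (s0 * s1 * s0') = 1 := by rw [mul_comm]; exact hsV1i
      rw [e1, e2, hs00']; norm_num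
    rwa [h2] at h1
  obtain ⟨_, δw, hδw, hwid⟩ := hlw
  have hwidc : ∀ x : ℝ, c - δw < x → x < c → wp x = x := by
    intro x h1 h2
    rw [hwid x h1 h2]; ring
  -- the set S and its supremum σ
  set S : Set ℝ := {x : ℝ | x ∈ Set.Ioo a c ∧ wp x ≠ x} with hS
  have hxsS : xstar ∈ S := ⟨⟨haxs, hxsc⟩, hxstar⟩
  have hSne : S.Nonempty := ⟨xstar, hxsS⟩
  have hSbdd : BddAbove S := ⟨c, fun y hy => le_of_lt hy.1.2⟩
  set σ : ℝ := sSup S with hσ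
  have hσa : a < σ := lt_of_lt_of_le haxs (le_csSup hSbdd hxsS)
  have hσc : σ < c := by
    have hub : ∀ y ∈ S, y ≤ c - δw := by
      intro y hy
      by_contra hyc
      push_neg at hyc
      exact hy.2 (hwidc y hyc hy.1.2)
    have := csSup_le hSne hub
    linarith
  -- any element of H commuting with wp fixes σ
  have hzfix : ∀ z ∈ H, z * wp = wp * z → z σ = σ := by
    intro z hz hcomm
    have hzm : StrictMono ⇑z := (hH z hz).1
    have hinv1 : ∀ x ∈ S, z x ∈ S := by
      intro x hx
      refine ⟨hmapIoo z hz x hx.1, ?_⟩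
      have h1 : wp (z x) = z (wp x) := by
        have := congrArg (fun f : Equiv.Perm ℝ => f x) hcomm
        simpa only [Equiv.Perm.mul_apply] using this.symm
      rw [h1]
      intro h2
      exact hx.2 (z.injective h2)
    have hinv2 : ∀ x ∈ S, z⁻¹ x ∈ S := by
      intro x hx
      have hzH' : z⁻¹ ∈ H := H.inv_mem hz
      refine ⟨hmapIoo z⁻¹ hzH' x hx.1, ?_⟩
      have hcomm' : z⁻¹ * wp = wp * z⁻¹ := by
        have hC : Commute z wp := hcomm
        exact hC.inv_left
      have h1 : wp (z⁻¹ x) = z⁻¹ (wp x) := by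
        have := congrArg (fun f : Equiv.Perm ℝ => f x) hcomm'
        simpa only [Equiv.Perm.mul_apply] using this.symm
      rw [h1]
      intro h2
      exact hx.2 (z⁻¹.injective h2)
    exact UPC.fix_sSup_set hzm hSne hSbdd hinv1 hinv2
  -- generation: H is generated by p0, p1
  have htopTF : Subgroup.closure (Set.range (PresentedGroup.of : Fin 2 → ThompsonF)) = ⊤ :=
    PresentedGroup.closure_range_of thompsonRels
  have himg : (⇑θ.toMonoidHom '' Set.range (PresentedGroup.of : Fin 2 → ThompsonF))
      = ({G0, G1} : Set ↥H) := by
    ext z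
    simp only [Set.mem_image, Set.mem_range, Set.mem_insert_iff, Set.mem_singleton_iff]
    constructor
    · rintro ⟨y, ⟨i, rfl⟩, rfl⟩
      fin_cases i
      · left; rfl
      · right; rfl
    · rintro (rfl | rfl)
      · exact ⟨PresentedGroup.of 0, ⟨0, rfl⟩, rfl⟩
      · exact ⟨PresentedGroup.of 1, ⟨1, rfl⟩, rfl⟩
  have htopH : Subgroup.closure ({G0, G1} : Set ↥H) = ⊤ := by
    calc Subgroup.closure ({G0, G1} : Set ↥H)
        = Subgroup.closure (⇑θ.toMonoidHom '' Set.range (PresentedGroup.of : Fin 2 → ThompsonF)) := by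
          rw [himg]
      _ = Subgroup.map θ.toMonoidHom
            (Subgroup.closure (Set.range (PresentedGroup.of : Fin 2 → ThompsonF))) :=
          (MonoidHom.map_closure _ _).symm
      _ = Subgroup.map θ.toMonoidHom ⊤ := by rw [htopTF]
      _ = ⊤ := Subgroup.map_top_of_surjective _ θ.surjective
  have HleC : ∀ f ∈ H, f ∈ Subgroup.closure ({p0, p1} : Set (Equiv.Perm ℝ)) := by
    intro f hf
    have h4 : (⟨f, hf⟩ : ↥H) ∈ Subgroup.closure ({G0, G1} : Set ↥H) := by
      rw [htopH]; trivial
    have h5 : H.subtype ⟨f, hf⟩ ∈ Subgroup.map H.subtype (Subgroup.closure ({G0, G1} : Set ↥H)) :=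
      Subgroup.mem_map_of_mem H.subtype h4
    rw [MonoidHom.map_closure] at h5
    have himg2 : (⇑H.subtype '' ({G0, G1} : Set ↥H)) = ({p0, p1} : Set (Equiv.Perm ℝ)) := by
      rw [Set.image_insert_eq, Set.image_singleton]
      rfl
    rw [himg2] at h5
    simpa using h5
  -- stabilizer helper
  have hstabH : ∀ y : ℝ, p0 y = y → p1 y = y → ∀ f ∈ H, f y = y := by
    intro y h0 h1 f hf
    have hsub : Subgroup.closure ({p0, p1} : Set (Equiv.Perm ℝ))
        ≤ MulAction.stabilizer (Equiv.Perm ℝ) y := by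
      rw [Subgroup.closure_le]
      rintro z (rfl | rfl)
      · rw [SetLike.mem_coe, MulAction.mem_stabilizer_iff]; exact h0
      · rw [SetLike.mem_coe, MulAction.mem_stabilizer_iff]; exact h1
    have := hsub (HleC f hf)
    rwa [MulAction.mem_stabilizer_iff] at this
  have hnofix : ∀ y ∈ Set.Ioo a c, p0 y = y → p1 y = y → False := by
    intro y hy h0 h1
    obtain ⟨f, hf, hfy⟩ := horb hy
    exact hfy (hstabH y h0 h1 f hf)
  have hfixzpow : ∀ (f : Equiv.Perm ℝ) (y : ℝ), f y = y → ∀ n : ℤ, (f^n) y = y := by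
    intro f y hf n
    have hb : f ∈ MulAction.stabilizer (Equiv.Perm ℝ) y := by
      rw [MulAction.mem_stabilizer_iff]; exact hf
    have h2 : f^n ∈ MulAction.stabilizer (Equiv.Perm ℝ) y :=
      Subgroup.zpow_mem _ hb n
    rwa [MulAction.mem_stabilizer_iff] at h2
  -- notation
  set up : Equiv.Perm ℝ := p1⁻¹ * p0 with hup
  set v3 : Equiv.Perm ℝ := UPC.Vel p0 p1 3 with hv3
  have hv3H : v3 ∈ H := hmemV 3
  have hv3wp : v3 * wp = wp * v3 := (UPC.commWV hrel1 hrel2 3 (le_refl 3)).symm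
  have hv3σ : v3 σ = σ := hzfix v3 hv3H hv3wp
  -- p1 is recovered from p0 and up, or from p0 and v3
  have hp1_of_u : ∀ y : ℝ, p0 y = y → up y = y → p1 y = y := by
    intro y h0 hu
    have hid : p1 * up = p0 := UPC.g0_eq_g1_mul_u
    have h2 : (p1 * up) y = p0 y := by rw [hid]
    rw [Equiv.Perm.mul_apply, hu, h0] at h2
    exact h2
  have hp1_of_v3 : ∀ y : ℝ, p0 y = y → v3 y = y → p1 y = y := by
    intro y h0 h3
    have hid : p0^(-3:ℤ) * v3 * p0^(3:ℤ) = p1 := UPC.g1_from_V3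
    have h2 : (p0^(-3:ℤ) * v3 * p0^(3:ℤ)) y = p1 y := by rw [hid]
    rw [Equiv.Perm.mul_apply, Equiv.Perm.mul_apply, hfixzpow p0 y h0 3, h3,
      hfixzpow p0 y h0 (-3)] at h2
    exact h2.symm
  -- the two sequences of iterates of σ
  set τp : ℕ → ℝ := fun n => (p0^((n:ℕ):ℤ)) σ with hτp
  set τm : ℕ → ℝ := fun n => (p0^(-((n:ℕ):ℤ))) σ with hτm
  have hτp0 : τp 0 = σ := by simp [hτp]
  have hτm0 : τm 0 = σ := by simp [hτm]; rfl
  have hshiftp : ∀ n : ℕ, p0 (τp n) = τp (n+1) := by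
    intro n
    have hexp : p0 * p0^((n:ℕ):ℤ) = p0^(((n+1:ℕ)):ℤ) := by
      rw [show (((n+1:ℕ)):ℤ) = 1 + ((n:ℕ):ℤ) by push_cast; ring, zpow_add, zpow_one]
    calc p0 (τp n) = (p0 * p0^((n:ℕ):ℤ)) σ := by rw [Equiv.Perm.mul_apply]
      _ = (p0^(((n+1:ℕ)):ℤ)) σ := by rw [hexp]
      _ = τp (n+1) := rfl
  have hshiftm : ∀ n : ℕ, p0⁻¹ (τm n) = τm (n+1) := by
    intro n
    have hexp : p0⁻¹ * p0^(-((n:ℕ):ℤ)) = p0^(-(((n+1:ℕ)):ℤ)) := by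
      rw [show (-(((n+1:ℕ)):ℤ)) = (-1) + (-((n:ℕ):ℤ)) by push_cast; ring, zpow_add,
        zpow_neg_one]
    calc p0⁻¹ (τm n) = (p0⁻¹ * p0^(-((n:ℕ):ℤ))) σ := by rw [Equiv.Perm.mul_apply]
      _ = (p0^(-(((n+1:ℕ)):ℤ))) σ := by rw [hexp]
      _ = τm (n+1) := rfl
  have hτpIoo : ∀ n : ℕ, τp n ∈ Set.Ioo a c := by
    intro n
    induction n with
    | zero => rw [hτp0]; exact ⟨hσa, hσc⟩
    | succ n ih =>
      rw [← hshiftp n]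
      exact hmapIoo p0 hp0H _ ih
  have hτmIoo : ∀ n : ℕ, τm n ∈ Set.Ioo a c := by
    intro n
    induction n with
    | zero => rw [hτm0]; exact ⟨hσa, hσc⟩
    | succ n ih =>
      rw [← hshiftm n]
      exact hmapIoo p0⁻¹ (H.inv_mem hp0H) _ ih
  -- up fixes the forward orbit, v3 fixes the backward orbit
  have hufixp : ∀ n : ℕ, up (τp n) = τp n := by
    intro n
    have hid := UPC.u_pow_comm (g0 := p0) (g1 := p1) ((n:ℕ):ℤ)
    have hUσ : (p0^(-((n:ℕ):ℤ)) * (p1⁻¹ * p0) * p0^(-(-((n:ℕ):ℤ)))) σ = σ := by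
      apply hzfix _ (hmemU (-((n:ℕ):ℤ)))
      exact (UPC.commWU hrel1 hrel2 (-((n:ℕ):ℤ)) (by omega)).symm
    calc up (τp n) = ((p1⁻¹ * p0) * p0^((n:ℕ):ℤ)) σ := by rw [Equiv.Perm.mul_apply]; rfl
      _ = (p0^((n:ℕ):ℤ) * (p0^(-((n:ℕ):ℤ)) * (p1⁻¹ * p0) * p0^(-(-((n:ℕ):ℤ))))) σ := by
          rw [hid]
      _ = (p0^((n:ℕ):ℤ)) ((p0^(-((n:ℕ):ℤ)) * (p1⁻¹ * p0) * p0^(-(-((n:ℕ):ℤ)))) σ) := by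
          rw [Equiv.Perm.mul_apply]
      _ = τp n := by rw [hUσ]
  have hv3fixm : ∀ n : ℕ, v3 (τm n) = τm n := by
    intro n
    have hid := UPC.v3_pow_comm (g0 := p0) (g1 := p1) ((n:ℕ):ℤ)
    have hVσ : (UPC.Vel p0 p1 (3+((n:ℕ):ℤ))) σ = σ := by
      apply hzfix _ (hmemV _)
      exact (UPC.commWV hrel1 hrel2 (3+((n:ℕ):ℤ)) (by omega)).symm
    calc v3 (τm n) = (UPC.Vel p0 p1 3 * p0^(-((n:ℕ):ℤ))) σ := by rw [Equiv.Perm.mul_apply]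
      _ = (p0^(-((n:ℕ):ℤ)) * UPC.Vel p0 p1 (3+((n:ℕ):ℤ))) σ := by rw [hid]
      _ = (p0^(-((n:ℕ):ℤ))) ((UPC.Vel p0 p1 (3+((n:ℕ):ℤ))) σ) := by rw [Equiv.Perm.mul_apply]
      _ = τm n := by rw [hVσ]
  -- final contradiction from: up identity near a⁺ and v3 identity near a⁺
  have hfinal : (∃ δ : ℝ, 0 < δ ∧ ∀ x : ℝ, a < x → x < a + δ → up x = x) →
      (∃ δ : ℝ, 0 < δ ∧ ∀ x : ℝ, a < x → x < a + δ → v3 x = x) → False := by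
    intro hu hv
    have hz3H : p0^(3:ℤ) ∈ H := H.zpow_mem hp0H 3
    have hp1Ka : ∃ δ : ℝ, 0 < δ ∧ ∀ x : ℝ, a < x → x < a + δ → p1 x = x := by
      have hconj := UPC.idnr_conj (a := a) hv ((hH _ hz3H).1) (hfixa _ hz3H)
      have hid : (p0^(3:ℤ))⁻¹ * v3 * p0^(3:ℤ) = p1 := by
        rw [← zpow_neg]
        exact UPC.g1_from_V3
      rwa [hid] at hconj
    have hp0Ka : ∃ δ : ℝ, 0 < δ ∧ ∀ x : ℝ, a < x → x < a + δ → p0 x = x := by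
      have hmul := UPC.idnr_mul hp1Ka hu
      rwa [UPC.g0_eq_g1_mul_u] at hmul
    obtain ⟨δ0, hδ0, h0⟩ := hp0Ka
    obtain ⟨δ1, hδ1, h1⟩ := hp1Ka
    set δ2 : ℝ := min (min δ0 δ1) (c - a) with hδ2
    have hδ2pos : 0 < δ2 := lt_min (lt_min hδ0 hδ1) (by linarith)
    set y : ℝ := a + δ2/2 with hy
    have hy1 : a < y := by rw [hy]; linarith
    have hy2 : y < c := by
      have h3 : δ2 ≤ c - a := min_le_right _ _
      rw [hy]; linarith
    have hy0 : y < a + δ0 := by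
      have h3 : δ2 ≤ δ0 := le_trans (min_le_left _ _) (min_le_left _ _)
      rw [hy]; linarith
    have hy1' : y < a + δ1 := by
      have h3 : δ2 ≤ δ1 := le_trans (min_le_left _ _) (min_le_right _ _)
      rw [hy]; linarith
    exact hnofix y ⟨hy1, hy2⟩ (h0 y hy1 hy0) (h1 y hy1 hy1')
  -- trichotomy on the motion of σ under p0
  rcases lt_trichotomy (p0 σ) σ with hltσ | heqσ | hgtσ
  · -- p0 moves σ down
    have hstep : ∀ n : ℕ, τp (n+1) < τp n := by
      intro n
      induction n with
      | zero =>
        have e := hshiftp 0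
        rw [hτp0] at e
        rw [hτp0, ← e]
        exact hltσ
      | succ n ih =>
        calc τp (n+1+1) = p0 (τp (n+1)) := (hshiftp (n+1)).symm
          _ < p0 (τp n) := (hH p0 hp0H).1 ih
          _ = τp (n+1) := hshiftp n
    have hbddp : BddBelow (Set.range τp) :=
      ⟨a, by rintro x ⟨n, rfl⟩; exact le_of_lt (hτpIoo n).1⟩
    set q' : ℝ := sInf (Set.range τp) with hq'
    have hq0 : p0 q' = q' :=
      UPC.shift_sInf_seq (hH p0 hp0H).1 hbddp
        (antitone_nat_of_succ_le (fun n => le_of_lt (hstep n))) hshiftp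
    have hqu : up q' = q' := UPC.fix_sInf_seq (hH up hmemu).1 hbddp hufixp
    have hq'σ : q' ≤ σ := by
      rw [← hτp0]
      exact csInf_le hbddp ⟨0, rfl⟩
    have haq' : a ≤ q' :=
      le_csInf (Set.range_nonempty τp) (by rintro x ⟨n, rfl⟩; exact le_of_lt (hτpIoo n).1)
    have huKa : ∃ δ : ℝ, 0 < δ ∧ ∀ x : ℝ, a < x → x < a + δ → up x = x := by
      rcases lt_or_eq_of_le haq' with hqlt | hqeq
      · exact (hnofix q' ⟨hqlt, lt_of_le_of_lt hq'σ hσc⟩ hq0 (hp1_of_u q' hq0 hqu)).elim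
      · obtain ⟨s, t, δ, hδ, haff⟩ := UPC.window_right_raw (hH up hmemu) a
        obtain ⟨x, ⟨n, rfl⟩, hxlt⟩ := exists_lt_of_csInf_lt (Set.range_nonempty τp)
          (show sInf (Set.range τp) < a + δ by rw [← hq', ← hqeq]; linarith)
        refine ⟨δ, hδ, UPC.affine_id_of_two_fixed haff (hτpIoo (n+1)).1
          (lt_trans (hstep n) hxlt) (hτpIoo n).1 hxlt (ne_of_lt (hstep n))
          (hufixp (n+1)) (hufixp n)⟩
    -- backward orbit goes up towards c
    have hstepm : ∀ n : ℕ, τm n < τm (n+1) := by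
      intro n
      induction n with
      | zero =>
        have e := hshiftm 0
        rw [hτm0] at e
        rw [hτm0, ← e]
        have h2 := (UPC.sm_inv (hH p0 hp0H).1) hltσ
        rwa [Equiv.Perm.inv_apply_self] at h2
      | succ n ih =>
        calc τm (n+1) = p0⁻¹ (τm n) := (hshiftm n).symm
          _ < p0⁻¹ (τm (n+1)) := (UPC.sm_inv (hH p0 hp0H).1) ih
          _ = τm (n+1+1) := hshiftm (n+1)
    have hbddm : BddAbove (Set.range τm) :=
      ⟨c, by rintro x ⟨n, rfl⟩; exact le_of_lt (hτmIoo n).2⟩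
    set pS : ℝ := sSup (Set.range τm) with hpS
    have hpS0' : p0⁻¹ pS = pS :=
      UPC.shift_sSup_seq (UPC.sm_inv (hH p0 hp0H).1) hbddm
        (monotone_nat_of_le_succ (fun n => le_of_lt (hstepm n))) hshiftm
    have hpS0 : p0 pS = pS := by
      have h2 := congrArg ⇑p0 hpS0'
      rw [Equiv.Perm.apply_inv_self] at h2
      exact h2.symm
    have hpSv3 : v3 pS = pS := UPC.fix_sSup_seq (hH v3 hv3H).1 hbddm hv3fixm
    have hσpS : σ ≤ pS := by
      rw [← hτm0]
      exact le_csSup hbddm ⟨0, rfl⟩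
    have hpSc : pS ≤ c :=
      csSup_le (Set.range_nonempty τm) (by rintro x ⟨n, rfl⟩; exact le_of_lt (hτmIoo n).2)
    have hv3Ka : ∃ δ : ℝ, 0 < δ ∧ ∀ x : ℝ, a < x → x < a + δ → v3 x = x := by
      rcases lt_or_eq_of_le hpSc with hplt | hpeq
      · exact (hnofix pS ⟨lt_of_lt_of_le hσa hσpS, hplt⟩ hpS0 (hp1_of_v3 pS hpS0 hpSv3)).elim
      · obtain ⟨s, t, δ, hδ, haff⟩ := UPC.window_left_raw (hH v3 hv3H) c
        obtain ⟨x, ⟨n, rfl⟩, hxgt⟩ := exists_lt_of_lt_csSup (Set.range_nonempty τm)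
          (show c - δ < sSup (Set.range τm) by rw [← hpS, hpeq]; linarith)
        apply hfail v3 hv3H
        refine ⟨δ, hδ, UPC.affine_id_of_two_fixed haff hxgt (hτmIoo n).2
          (lt_trans hxgt (hstepm n)) (hτmIoo (n+1)).2 (ne_of_lt (hstepm n))
          (hv3fixm n) (hv3fixm (n+1))⟩
    exact hfinal huKa hv3Ka
  · -- p0 fixes σ
    exact hnofix σ ⟨hσa, hσc⟩ heqσ (hp1_of_v3 σ heqσ hv3σ)
  · -- p0 moves σ up
    have hstep : ∀ n : ℕ, τp n < τp (n+1) := by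
      intro n
      induction n with
      | zero =>
        have e := hshiftp 0
        rw [hτp0] at e
        rw [hτp0, ← e]
        exact hgtσ
      | succ n ih =>
        calc τp (n+1) = p0 (τp n) := (hshiftp n).symm
          _ < p0 (τp (n+1)) := (hH p0 hp0H).1 ih
          _ = τp (n+1+1) := hshiftp (n+1)
    have hbddp : BddAbove (Set.range τp) :=
      ⟨c, by rintro x ⟨n, rfl⟩; exact le_of_lt (hτpIoo n).2⟩
    set qS : ℝ := sSup (Set.range τp) with hqS
    have hq0 : p0 qS = qS :=
      UPC.shift_sSup_seq (hH p0 hp0H).1 hbddp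
        (monotone_nat_of_le_succ (fun n => le_of_lt (hstep n))) hshiftp
    have hqu : up qS = qS := UPC.fix_sSup_seq (hH up hmemu).1 hbddp hufixp
    have hσq : σ ≤ qS := by
      rw [← hτp0]
      exact le_csSup hbddp ⟨0, rfl⟩
    have hqc : qS ≤ c :=
      csSup_le (Set.range_nonempty τp) (by rintro x ⟨n, rfl⟩; exact le_of_lt (hτpIoo n).2)
    have huKa : ∃ δ : ℝ, 0 < δ ∧ ∀ x : ℝ, a < x → x < a + δ → up x = x := by
      rcases lt_or_eq_of_le hqc with hqlt | hqeq
      · exact (hnofix qS ⟨lt_of_lt_of_le hσa hσq, hqlt⟩ hq0 (hp1_of_u qS hq0 hqu)).elim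
      · obtain ⟨s, t, δ, hδ, haff⟩ := UPC.window_left_raw (hH up hmemu) c
        obtain ⟨x, ⟨n, rfl⟩, hxgt⟩ := exists_lt_of_lt_csSup (Set.range_nonempty τp)
          (show c - δ < sSup (Set.range τp) by rw [← hqS, hqeq]; linarith)
        apply hfail up hmemu
        refine ⟨δ, hδ, UPC.affine_id_of_two_fixed haff hxgt (hτpIoo n).2
          (lt_trans hxgt (hstep n)) (hτpIoo (n+1)).2 (ne_of_lt (hstep n))
          (hufixp n) (hufixp (n+1))⟩
    have hstepm : ∀ n : ℕ, τm (n+1) < τm n := by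
      intro n
      induction n with
      | zero =>
        have e := hshiftm 0
        rw [hτm0] at e
        rw [hτm0, ← e]
        have h2 := (UPC.sm_inv (hH p0 hp0H).1) hgtσ
        rwa [Equiv.Perm.inv_apply_self] at h2
      | succ n ih =>
        calc τm (n+1+1) = p0⁻¹ (τm (n+1)) := (hshiftm (n+1)).symm
          _ < p0⁻¹ (τm n) := (UPC.sm_inv (hH p0 hp0H).1) ih
          _ = τm (n+1) := hshiftm n
    have hbddm : BddBelow (Set.range τm) :=
      ⟨a, by rintro x ⟨n, rfl⟩; exact le_of_lt (hτmIoo n).1⟩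
    set pI : ℝ := sInf (Set.range τm) with hpI
    have hpI0' : p0⁻¹ pI = pI :=
      UPC.shift_sInf_seq (UPC.sm_inv (hH p0 hp0H).1) hbddm
        (antitone_nat_of_succ_le (fun n => le_of_lt (hstepm n))) hshiftm
    have hpI0 : p0 pI = pI := by
      have h2 := congrArg ⇑p0 hpI0'
      rw [Equiv.Perm.apply_inv_self] at h2
      exact h2.symm
    have hpIv3 : v3 pI = pI := UPC.fix_sInf_seq (hH v3 hv3H).1 hbddm hv3fixm
    have hpIσ : pI ≤ σ := by
      rw [← hτm0]
      exact csInf_le hbddm ⟨0, rfl⟩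
    have hapI : a ≤ pI :=
      le_csInf (Set.range_nonempty τm) (by rintro x ⟨n, rfl⟩; exact le_of_lt (hτmIoo n).1)
    have hv3Ka : ∃ δ : ℝ, 0 < δ ∧ ∀ x : ℝ, a < x → x < a + δ → v3 x = x := by
      rcases lt_or_eq_of_le hapI with hplt | hpeq
      · exact (hnofix pI ⟨hplt, lt_of_le_of_lt hpIσ hσc⟩ hpI0 (hp1_of_v3 pI hpI0 hpIv3)).elim
      · obtain ⟨s, t, δ, hδ, haff⟩ := UPC.window_right_raw (hH v3 hv3H) a
        obtain ⟨x, ⟨n, rfl⟩, hxlt⟩ := exists_lt_of_csInf_lt (Set.range_nonempty τm)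
          (show sInf (Set.range τm) < a + δ by rw [← hpI, ← hpeq]; linarith)
        refine ⟨δ, hδ, UPC.affine_id_of_two_fixed haff (hτmIoo (n+1)).1
          (lt_trans (hstepm n) hxlt) (hτmIoo n).1 hxlt (ne_of_lt (hstepm n))
          (hv3fixm (n+1)) (hv3fixm n)⟩
    exact hfinal huKa hv3Ka
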